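/- Let q ∈ ℝ, q ≠ 1, and suppose f : (0,1] → ℝ is Lebesgue measurable, satisfies f(xy) + f((1-x)y) - f(y) = (f(x) + f(1-x))·y^q for all x ∈ (0,1), y ∈ (0,1], and the limit of f(x) as x → 1⁻ exists and equals f(1). Then there exists c* ∈ ℝ such that f(x) = c*·(x - x^q) for all x ∈ (0,1]. -/

import Mathlib

open MeasureTheory Set

private lemma aux_nat_mul (D : ℝ → ℝ)
    (hadd : ∀ a b : ℝ, 0 < a → 0 < b → a + b ≤ 1 → D (a + b) = D a + D b) :
    ∀ (n : ℕ) (t : ℝ), 0 < t → ((n : ℝ) + 1) * t ≤ 1 →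
      D (((n : ℝ) + 1) * t) = ((n : ℝ) + 1) * D t := by
  intro n
  induction n with
  | zero => intro t ht h; norm_num
  | succ n ih =>
    intro t ht h
    push_cast at h ⊢
    have hn1 : (0:ℝ) < ((n:ℝ)+1) * t := by positivity
    have hle : ((n:ℝ)+1) * t ≤ 1 := by nlinarith
    have e : ((n:ℝ)+1+1) * t = ((n:ℝ)+1)*t + t := by ring
    have h' : ((n:ℝ)+1)*t + t ≤ 1 := by nlinarith
    rw [e, hadd _ _ hn1 ht h', ih t ht hle]
    ring

private lemma aux_linear (D : ℝ → ℝ) (hD : Measurable D)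
    (hadd : ∀ a b : ℝ, 0 < a → 0 < b → a + b ≤ 1 → D (a + b) = D a + D b)
    (hD1 : D 1 = 0) : ∀ x ∈ Set.Ioc (0:ℝ) 1, D x = 0 := by
  -- vanishing on rationals
  have hrat : ∀ r : ℚ, 0 < r → (r : ℝ) ≤ 1 → D r = 0 := by
    intro r hr hr1
    have hden : (0:ℝ) < (r.den : ℝ) := by exact_mod_cast r.pos
    have hcastd : ((r.den - 1 : ℕ) : ℝ) + 1 = (r.den : ℝ) := by
      rw [Nat.cast_sub r.pos]; push_cast; ring
    have hd0 : D (1 / (r.den : ℝ)) = 0 := by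
      have h := aux_nat_mul D hadd (r.den - 1) (1 / (r.den:ℝ)) (by positivity)
        (by rw [hcastd, mul_one_div_cancel hden.ne'])
      rw [hcastd, mul_one_div_cancel hden.ne', hD1] at h
      have := h.symm
      rcases mul_eq_zero.mp this with h0 | h0
      · exact absurd h0 hden.ne'
      · exact h0
    set p : ℕ := r.num.toNat with hp
    have hnum : (0:ℤ) < r.num := Rat.num_pos.2 hr
    have hp1 : 1 ≤ p := by omega
    have hpcast : ((p:ℝ)) = (r.num : ℝ) := by
      rw [hp]; exact_mod_cast Int.toNat_of_nonneg hnum.le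
    have hcastp : ((p - 1 : ℕ) : ℝ) + 1 = (p : ℝ) := by
      rw [Nat.cast_sub hp1]; push_cast; ring
    have hrval : (p:ℝ) * (1 / (r.den:ℝ)) = (r:ℝ) := by
      rw [hpcast, Rat.cast_def]; ring
    have h := aux_nat_mul D hadd (p - 1) (1 / (r.den:ℝ)) (by positivity)
      (by rw [hcastp, hrval]; exact hr1)
    rw [hcastp, hrval, hd0, mul_zero] at h
    exact h
  -- a set of large measure on which |D| is bounded
  set S : ℕ → Set ℝ := fun n => {x | x ∈ Set.Ioc (0:ℝ) 1 ∧ |D x| ≤ n} with hSdef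
  have hSm : ∀ n, MeasurableSet (S n) :=
    fun n => measurableSet_Ioc.inter (measurableSet_le hD.abs measurable_const)
  have hmono : Monotone S := by
    intro m n hmn x hx
    exact ⟨hx.1, hx.2.trans (by exact_mod_cast Nat.cast_le.2 hmn)⟩
  have hU : ⋃ n, S n = Set.Ioc (0:ℝ) 1 := by
    ext x
    simp only [Set.mem_iUnion, hSdef, Set.mem_setOf_eq]
    constructor
    · rintro ⟨n, h, _⟩; exact h
    · intro hx; exact ⟨⌈|D x|⌉₊, hx, Nat.le_ceil _⟩
  have hsup : (⨆ n, volume (S n)) = 1 := by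
    rw [← (hmono.directed_le).measure_iUnion, hU, Real.volume_Ioc]
    norm_num
  obtain ⟨N, hN⟩ : ∃ n : ℕ, ENNReal.ofReal (3/4) < volume (S n) := by
    apply lt_iSup_iff.mp
    rw [hsup, ← ENNReal.ofReal_one]
    exact (ENNReal.ofReal_lt_ofReal_iff (by norm_num)).2 (by norm_num)
  -- |D| bounded by 2N on (0, 1/4]
  have hbound : ∀ t : ℝ, 0 < t → t ≤ 1/4 → |D t| ≤ 2 * (N:ℝ) := by
    intro t ht ht4
    have hne : (S N ∩ (fun x => x + t) ⁻¹' (S N)).Nonempty := by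
      by_contra hcon
      rw [Set.not_nonempty_iff_eq_empty] at hcon
      have hdis : Disjoint (S N) ((fun x => x + t) ⁻¹' (S N)) :=
        Set.disjoint_iff_inter_eq_empty.2 hcon
      have hmeas' : MeasurableSet ((fun x => x + t) ⁻¹' (S N)) :=
        (hSm N).preimage (measurable_add_const t)
      have hmu : volume (S N ∪ (fun x => x + t) ⁻¹' (S N))
          = volume (S N) + volume ((fun x => x + t) ⁻¹' (S N)) := measure_union hdis hmeas'
      have hsub : S N ∪ (fun x => x + t) ⁻¹' (S N) ⊆ Set.Ioc (-(1/4) : ℝ) 1 := by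
        rintro x (hx | hx)
        · exact ⟨by linarith [hx.1.1], hx.1.2⟩
        · have h1 : (0:ℝ) < x + t := hx.1.1
          have h2 : x + t ≤ 1 := hx.1.2
          exact ⟨by linarith, by linarith⟩
      have hle : volume (S N) + volume ((fun x => x + t) ⁻¹' (S N))
          ≤ ENNReal.ofReal (5/4) := by
        rw [← hmu]
        calc volume (S N ∪ (fun x => x + t) ⁻¹' (S N))
            ≤ volume (Set.Ioc (-(1/4):ℝ) 1) := measure_mono hsub
          _ = ENNReal.ofReal (5/4) := by rw [Real.volume_Ioc]; norm_num
      have hpre : volume ((fun x => x + t) ⁻¹' (S N)) = volume (S N) :=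
        measure_preimage_add_right volume t (S N)
      rw [hpre] at hle
      have hcontra : ENNReal.ofReal (3/2) ≤ ENNReal.ofReal (5/4) := by
        calc ENNReal.ofReal (3/2) = ENNReal.ofReal (3/4) + ENNReal.ofReal (3/4) := by
              rw [← ENNReal.ofReal_add (by norm_num) (by norm_num)]; norm_num
          _ ≤ volume (S N) + volume (S N) := add_le_add hN.le hN.le
          _ ≤ ENNReal.ofReal (5/4) := hle
      rw [ENNReal.ofReal_le_ofReal_iff (by norm_num)] at hcontra
      linarith
    obtain ⟨x, hx1, hx2⟩ := hne
    have hxmem : x ∈ Set.Ioc (0:ℝ) 1 := hx1.1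
    have hxt : x + t ∈ Set.Ioc (0:ℝ) 1 := hx2.1
    have hDsum : D (x + t) = D x + D t := hadd x t hxmem.1 ht hxt.2
    have hDt : D t = D (x + t) - D x := by linarith
    rw [hDt]
    have h1 : |D (x + t)| ≤ (N:ℝ) := hx2.2
    have h2 : |D x| ≤ (N:ℝ) := hx1.2
    have htri : |D (x + t) - D x| ≤ |D (x + t)| + |D x| := by
      rw [sub_eq_add_neg]
      refine (abs_add_le _ _).trans ?_
      rw [abs_neg]
    linarith
  -- |D s| ≤ 2N/(n+1) for small s
  have hsmall : ∀ (n : ℕ) (s : ℝ), 0 < s → s ≤ 1/(4*((n:ℝ)+1)) →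
      |D s| ≤ 2*(N:ℝ)/((n:ℝ)+1) := by
    intro n s hs hsle
    have hn1 : (0:ℝ) < (n:ℝ)+1 := by positivity
    have heq : ((n:ℝ)+1) * (1/(4*((n:ℝ)+1))) = 1/4 := by field_simp
    have hle1 : ((n:ℝ)+1) * s ≤ 1/4 := by
      calc ((n:ℝ)+1) * s ≤ ((n:ℝ)+1) * (1/(4*((n:ℝ)+1))) :=
            mul_le_mul_of_nonneg_left hsle hn1.le
        _ = 1/4 := heq
    have hb := hbound (((n:ℝ)+1)*s) (by positivity) hle1
    have hmul := aux_nat_mul D hadd n s hs (le_trans hle1 (by norm_num))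
    rw [hmul, abs_mul, abs_of_pos hn1] at hb
    rw [le_div_iff₀ hn1]
    linarith [mul_comm ((n:ℝ)+1) |D s|]
  -- conclusion
  intro x hx
  have hub : ∀ n : ℕ, |D x| ≤ 2*(N:ℝ)/((n:ℝ)+1) := by
    intro n
    have hn1 : (0:ℝ) < (n:ℝ)+1 := by positivity
    by_cases hc : x ≤ 1/(4*((n:ℝ)+1))
    · exact hsmall n x hx.1 hc
    · push_neg at hc
      have hd : (0:ℝ) < 1/(4*((n:ℝ)+1)) := by positivity
      have hpos : (0:ℝ) < x - 1/(4*((n:ℝ)+1)) := by linarith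
      obtain ⟨r, hr1, hr2⟩ := exists_rat_btwn (show x - 1/(4*((n:ℝ)+1)) < x by linarith [hpos])
      have hrpos : (0:ℝ) < (r:ℝ) := by linarith
      have hq0 : (0:ℚ) < r := by exact_mod_cast hrpos
      have hr0 : D r = 0 := hrat r hq0 (by linarith [hx.2])
      have hsplit : D x = D r + D (x - r) := by
        have h := hadd r (x - r) hrpos (by linarith) (by rw [show (r:ℝ) + (x - (r:ℝ)) = x by ring]; exact hx.2)
        rw [show (r:ℝ) + (x - (r:ℝ)) = x by ring] at h
        exact h
      rw [hsplit, hr0, zero_add]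
      exact hsmall n (x - r) (by linarith) (by linarith)
  by_contra hne0
  have habs : 0 < |D x| := abs_pos.2 hne0
  obtain ⟨n, hn⟩ := exists_nat_gt (2*(N:ℝ)/|D x|)
  have hn1 : (0:ℝ) < (n:ℝ)+1 := by positivity
  have hkey : 2*(N:ℝ) < ((n:ℝ)+1) * |D x| := by
    have h' : 2*(N:ℝ)/|D x| < (n:ℝ)+1 := lt_trans hn (lt_add_one _)
    exact (div_lt_iff₀ habs).1 h'
  have h2 : |D x| * ((n:ℝ)+1) ≤ 2*(N:ℝ) := (le_div_iff₀ hn1).1 (hub n)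
  nlinarith

theorem stmt_6 (q : ℝ) (hq : q ≠ 1) (f : ℝ → ℝ)
    (hmeas : Measurable fun x : Set.Ioc (0:ℝ) 1 => f x)
    (hf : ∀ x ∈ Set.Ioo (0:ℝ) 1, ∀ y ∈ Set.Ioc (0:ℝ) 1,
      f (x * y) + f ((1 - x) * y) - f y = (f x + f (1 - x)) * y ^ q)
    (hlim : Filter.Tendsto f (nhdsWithin 1 (Set.Iio 1)) (nhds (f 1))) :
    ∃ cs : ℝ, ∀ x ∈ Set.Ioc (0:ℝ) 1, f x = cs * (x - x ^ q) := by
  -- measurable extension of f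
  obtain ⟨f₀, hf₀meas, hf₀eq⟩ : ∃ g : ℝ → ℝ, Measurable g ∧
      ∀ x, x ∈ Set.Ioc (0:ℝ) 1 → g x = f x := by
    refine ⟨Function.extend Subtype.val (fun x : Set.Ioc (0:ℝ) 1 => f x) (fun _ => 0),
      (MeasurableEmbedding.subtype_coe measurableSet_Ioc).measurable_extend hmeas
        measurable_const, ?_⟩
    intro x hx
    exact Subtype.val_injective.extend_apply _ _ ⟨x, hx⟩
  -- f 1 = 0
  have h1 : f 1 = 0 := by
    have h := hf (1/2) (by norm_num) 1 (by norm_num)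
    rw [Real.one_rpow] at h
    norm_num at h
    linarith
  -- additivity identity
  have key2 : ∀ a b : ℝ, 0 < a → 0 < b → a + b ≤ 1 →
      f a + f b - f (a+b) = (f (a/(a+b)) + f (b/(a+b))) * (a+b)^q := by
    intro a b ha hb hab
    have hab0 : 0 < a + b := by linarith
    have hx : a/(a+b) ∈ Set.Ioo (0:ℝ) 1 :=
      ⟨div_pos ha hab0, (div_lt_one hab0).2 (by linarith)⟩
    have h := hf _ hx (a+b) ⟨hab0, hab⟩
    have e1 : a/(a+b) * (a+b) = a := div_mul_cancel₀ _ hab0.ne'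
    have e2 : 1 - a/(a+b) = b/(a+b) := by field_simp; ring
    have e3 : (1 - a/(a+b)) * (a+b) = b := by rw [e2]; exact div_mul_cancel₀ _ hab0.ne'
    rw [e1, e3, e2] at h
    exact h
  -- scaling identity
  have key3 : ∀ l : ℝ, l ∈ Set.Ioc (0:ℝ) 1 → ∀ a b : ℝ, 0 < a → 0 < b → a + b ≤ 1 →
      f (l*a) + f (l*b) - f (l*(a+b)) = l^q * (f a + f b - f (a+b)) := by
    intro l hl a b ha hb hab
    have hab0 : 0 < a + b := by linarith
    have h2 := key2 a b ha hb hab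
    have hla : 0 < l * a := mul_pos hl.1 ha
    have hlb : 0 < l * b := mul_pos hl.1 hb
    have hs : l * a + l * b = l * (a + b) := by ring
    have hsum : l * a + l * b ≤ 1 := by
      rw [hs]
      calc l * (a+b) ≤ 1 * 1 := mul_le_mul hl.2 hab hab0.le (by norm_num)
        _ = 1 := by norm_num
    have h3 := key2 (l*a) (l*b) hla hlb hsum
    have r1 : l*a/(l*a + l*b) = a/(a+b) := by rw [hs]; exact mul_div_mul_left _ _ hl.1.ne'
    have r2 : l*b/(l*a + l*b) = b/(a+b) := by rw [hs]; exact mul_div_mul_left _ _ hl.1.ne'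
    rw [r1, r2, hs, Real.mul_rpow hl.1.le hab0.le] at h3
    rw [h3, h2]
    ring
  -- the key structural identity
  have star : ∀ l ∈ Set.Ioc (0:ℝ) 1, ∀ x ∈ Set.Ioc (0:ℝ) 1,
      f (l*x) = l^q * f x + f l * x := by
    intro l hl
    set D : ℝ → ℝ := fun x => f₀ (l*x) - l^q * f₀ x - f l * x with hDdef
    have hmem : ∀ x ∈ Set.Ioc (0:ℝ) 1, l * x ∈ Set.Ioc (0:ℝ) 1 := by
      intro x hx
      constructor
      · exact mul_pos hl.1 hx.1
      · calc l * x ≤ 1 * 1 := mul_le_mul hl.2 hx.2 hx.1.le (by norm_num)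
          _ = 1 := by norm_num
    have hDeq : ∀ x ∈ Set.Ioc (0:ℝ) 1, D x = f (l*x) - l^q * f x - f l * x := by
      intro x hx
      rw [hDdef]
      simp only
      rw [hf₀eq _ (hmem x hx), hf₀eq _ hx]
    have hDmeas : Measurable D := by
      apply Measurable.sub
      apply Measurable.sub
      · exact hf₀meas.comp (measurable_const_mul l)
      · exact (hf₀meas).const_mul _
      · exact (measurable_id).const_mul _
    have hDadd : ∀ a b : ℝ, 0 < a → 0 < b → a + b ≤ 1 → D (a + b) = D a + D b := by
      intro a b ha hb hab
      have hamem : a ∈ Set.Ioc (0:ℝ) 1 := ⟨ha, by linarith⟩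
      have hbmem : b ∈ Set.Ioc (0:ℝ) 1 := ⟨hb, by linarith⟩
      have habmem : a + b ∈ Set.Ioc (0:ℝ) 1 := ⟨by linarith, hab⟩
      rw [hDeq _ hamem, hDeq _ hbmem, hDeq _ habmem]
      have h := key3 l hl a b ha hb hab
      ring_nf
      ring_nf at h
      linarith
    have hD1 : D 1 = 0 := by
      have h1mem : (1:ℝ) ∈ Set.Ioc (0:ℝ) 1 := by norm_num
      rw [hDeq 1 h1mem, mul_one, h1]
      ring
    have hzero := aux_linear D hDmeas hDadd hD1
    intro x hx
    have := hzero x hx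
    rw [hDeq x hx] at this
    linarith
  -- final algebra
  have h12 : (1/2:ℝ) ∈ Set.Ioc (0:ℝ) 1 := by norm_num
  have hhalf : (1/2:ℝ)^q ≠ (1/2:ℝ) := by
    intro h
    have h2 : ((1/2:ℝ))^(1:ℝ) = 1/2 := Real.rpow_one _
    rcases lt_trichotomy q 1 with hlt | heq | hgt
    · have := Real.rpow_lt_rpow_of_exponent_gt (by norm_num : (0:ℝ) < 1/2)
        (by norm_num : (1/2:ℝ) < 1) hlt
      rw [h2, h] at this
      exact lt_irrefl _ this
    · exact hq heq
    · have := Real.rpow_lt_rpow_of_exponent_gt (by norm_num : (0:ℝ) < 1/2)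
        (by norm_num : (1/2:ℝ) < 1) hgt
      rw [h2, h] at this
      exact lt_irrefl _ this
  have hne' : (1/2:ℝ) - (1/2:ℝ)^q ≠ 0 := sub_ne_zero.2 (Ne.symm hhalf)
  refine ⟨f (1/2) / ((1/2:ℝ) - (1/2:ℝ)^q), ?_⟩
  intro x hx
  have e1 := star (1/2) h12 x hx
  have e2 := star x hx (1/2) h12
  rw [show x * (1/2:ℝ) = (1/2:ℝ) * x from mul_comm _ _] at e2
  have key : f x * ((1/2:ℝ) - (1/2:ℝ)^q) = f (1/2) * (x - x^q) := by
    have h := e1.symm.trans e2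
    linear_combination -h
  rw [div_mul_eq_mul_div, eq_div_iff hne']
  linear_combination key
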